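/- Let λ : ℕ → ℝ be a nonnegative summable sequence and let a : ℕ → ℝ satisfy ∑_k a_k² < ∞. Let μ̃ = ⨂_{k∈ℕ} N(a_k, λ_k) be the infinite product on ℕ → ℝ of the one-dimensional Gaussian measures with mean a_k and variance λ_k. Then μ̃({x : ℕ → ℝ | the series ∑_k x_k² converges}) = 1, i.e., the infinite-product Gaussian measure is concentrated on the sequences belonging to ℓ². -/

import Mathlib

open MeasureTheory ProbabilityTheory
open Real
open scoped ENNReal NNReal

/-- Second moment of the standard Gaussian is finite. -/
lemma lintegral_sq_gaussianReal_std_lt_top :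
    ∫⁻ y : ℝ, ENNReal.ofReal (y ^ 2) ∂(gaussianReal 0 1) < ⊤ := by
  have hmeas : Measurable fun y : ℝ => ENNReal.ofReal (y ^ 2) :=
    ENNReal.measurable_ofReal.comp (measurable_id.pow_const 2)
  rw [gaussianReal_of_var_ne_zero 0 one_ne_zero,
    lintegral_withDensity_eq_lintegral_mul _ (measurable_gaussianPDF 0 1) hmeas]
  have heq : ∀ y : ℝ, (gaussianPDF 0 1 * fun y : ℝ => ENNReal.ofReal (y ^ 2)) y
      = ENNReal.ofReal (gaussianPDFReal 0 1 y * y ^ 2) := by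
    intro y
    simp [gaussianPDF, ENNReal.ofReal_mul (gaussianPDFReal_nonneg 0 1 y)]
  simp_rw [heq]
  have hint : Integrable (fun y : ℝ => gaussianPDFReal 0 1 y * y ^ 2) := by
    have h0 : Integrable (fun y : ℝ => y ^ (2 : ℝ) * rexp (-(1/2) * y ^ 2)) :=
      integrable_rpow_mul_exp_neg_mul_sq (by norm_num) (by norm_num)
    have h2 : ∀ y : ℝ, y ^ (2 : ℝ) = y ^ 2 := fun y => by
      rw [show (2 : ℝ) = ((2 : ℕ) : ℝ) by norm_num, Real.rpow_natCast]
    have h1 : Integrable (fun y : ℝ => (√(2 * π * ((1:ℝ≥0):ℝ)))⁻¹ *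
        (y ^ 2 * rexp (-(1/2) * y ^ 2))) := by
      refine Integrable.const_mul ?_ _
      simpa [h2] using h0
    refine h1.congr (Filter.Eventually.of_forall fun y => ?_)
    simp only [gaussianPDFReal]
    rw [show -(y - 0) ^ 2 / (2 * ((1:ℝ≥0):ℝ)) = -(1/2) * y ^ 2 by push_cast; ring]
    ring
  rw [← hasFiniteIntegral_iff_ofReal
    (Filter.Eventually.of_forall fun y => mul_nonneg (gaussianPDFReal_nonneg 0 1 y) (sq_nonneg y))]
  exact hint.hasFiniteIntegral

/-- Scaling: second moment of centered Gaussian. -/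
lemma lintegral_sq_gaussianReal_centered (v : ℝ≥0) :
    ∫⁻ y : ℝ, ENNReal.ofReal (y ^ 2) ∂(gaussianReal 0 v)
      = (v : ℝ≥0∞) * ∫⁻ y : ℝ, ENNReal.ofReal (y ^ 2) ∂(gaussianReal 0 1) := by
  have hmeas : Measurable fun y : ℝ => ENNReal.ofReal (y ^ 2) :=
    ENNReal.measurable_ofReal.comp (measurable_id.pow_const 2)
  have hmap := gaussianReal_map_const_mul (μ := 0) (v := 1) (√(v : ℝ))
  have hv : (⟨(√(v : ℝ)) ^ 2, sq_nonneg _⟩ : ℝ≥0) * 1 = v := by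
    ext
    simp [Real.sq_sqrt v.coe_nonneg]
  rw [mul_zero] at hmap
  replace hmap : Measure.map (fun x => √(v : ℝ) * x) (gaussianReal 0 1) = gaussianReal 0 v := by
    rw [hmap]; congr 1
  rw [← hmap, lintegral_map hmeas (measurable_const_mul _)]
  have : ∀ y : ℝ, ENNReal.ofReal ((√(v : ℝ) * y) ^ 2)
      = (v : ℝ≥0∞) * ENNReal.ofReal (y ^ 2) := by
    intro y
    rw [mul_pow, Real.sq_sqrt v.coe_nonneg, ENNReal.ofReal_mul v.coe_nonneg,
      ENNReal.ofReal_coe_nnreal]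
  simp_rw [this]
  rw [lintegral_const_mul _ hmeas]

/-- Bound on the second moment of a general Gaussian. -/
lemma lintegral_sq_gaussianReal_le (m : ℝ) (v : ℝ≥0) :
    ∫⁻ y : ℝ, ENNReal.ofReal (y ^ 2) ∂(gaussianReal m v)
      ≤ ENNReal.ofReal (2 * m ^ 2)
        + 2 * v * ∫⁻ y : ℝ, ENNReal.ofReal (y ^ 2) ∂(gaussianReal 0 1) := by
  have hmeas : Measurable fun y : ℝ => ENNReal.ofReal (y ^ 2) :=
    ENNReal.measurable_ofReal.comp (measurable_id.pow_const 2)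
  have hmap := gaussianReal_map_add_const (μ := 0) (v := v) m
  rw [zero_add] at hmap
  rw [← hmap, lintegral_map hmeas (measurable_add_const m)]
  calc ∫⁻ y : ℝ, ENNReal.ofReal ((y + m) ^ 2) ∂(gaussianReal 0 v)
      ≤ ∫⁻ y : ℝ, (ENNReal.ofReal (2 * y ^ 2) + ENNReal.ofReal (2 * m ^ 2))
          ∂(gaussianReal 0 v) := by
        refine lintegral_mono fun y => ?_
        rw [← ENNReal.ofReal_add (by positivity) (by positivity)]
        exact ENNReal.ofReal_le_ofReal (by nlinarith [sq_nonneg (y - m)])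
    _ = ENNReal.ofReal (2 * m ^ 2)
        + 2 * v * ∫⁻ y : ℝ, ENNReal.ofReal (y ^ 2) ∂(gaussianReal 0 1) := by
        rw [lintegral_add_right _ measurable_const, lintegral_const, measure_univ, mul_one,
          add_comm]
        congr 1
        have : ∀ y : ℝ, ENNReal.ofReal (2 * y ^ 2) = 2 * ENNReal.ofReal (y ^ 2) := fun y => by
          rw [ENNReal.ofReal_mul (by norm_num), ENNReal.ofReal_ofNat]
        simp_rw [this]
        rw [lintegral_const_mul _ hmeas, lintegral_sq_gaussianReal_centered, mul_assoc]


/-- The infinite product `μ̃ = ⨂_{k∈ℕ} N(a k, λ k)` of one-dimensional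
Gaussian measures (a probability measure on `ℕ → ℝ` whose finite-dimensional marginals are
the corresponding finite products) is concentrated on the square-summable sequences,
provided `λ` is nonnegative summable and `∑ k, (a k)^2 < ∞`. -/
theorem infinite_product_gaussian_concentrated_on_l2
    (lam a : ℕ → ℝ) (hlam_nonneg : ∀ k, 0 ≤ lam k) (hlam_summable : Summable lam)
    (ha : Summable fun k => a k ^ 2)
    (μ : Measure (ℕ → ℝ)) [IsProbabilityMeasure μ]
    (hμ : IsProjectiveLimit μ
      (fun I : Finset ℕ =>
        Measure.pi fun i : I => gaussianReal (a i) (Real.toNNReal (lam i)))) :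
    μ {x : ℕ → ℝ | Summable fun k => x k ^ 2} = 1 := by
  set K := ∫⁻ y : ℝ, ENNReal.ofReal (y ^ 2) ∂(gaussianReal 0 1) with hK_def
  have hK : K < ⊤ := lintegral_sq_gaussianReal_std_lt_top
  have hmeas : ∀ k, Measurable fun x : ℕ → ℝ => ENNReal.ofReal (x k ^ 2) := fun k =>
    ENNReal.measurable_ofReal.comp ((measurable_pi_apply k).pow_const 2)
  -- the marginal computation
  have hmarg : ∀ k, ∫⁻ x, ENNReal.ofReal (x k ^ 2) ∂μ
      = ∫⁻ y : ℝ, ENNReal.ofReal (y ^ 2) ∂(gaussianReal (a k) (Real.toNNReal (lam k))) := by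
    intro k
    haveI hu : Unique (({k} : Finset ℕ) : Type) :=
      ⟨⟨⟨k, Finset.mem_singleton_self k⟩⟩, fun a => Subtype.ext (Finset.mem_singleton.mp a.2)⟩
    have hdef : ((default : (({k} : Finset ℕ) : Type)) : ℕ) = k :=
      Finset.mem_singleton.mp (default : (({k} : Finset ℕ) : Type)).2
    have hf : Measurable fun z : ℝ => ENNReal.ofReal (z ^ 2) :=
      ENNReal.measurable_ofReal.comp (measurable_id.pow_const 2)
    have h3 := (measurePreserving_piUnique
      (fun i : ({k} : Finset ℕ) => gaussianReal (a i) (Real.toNNReal (lam i)))).lintegral_comp hf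
    rw [hdef] at h3
    have h1 : Measure.map (({k} : Finset ℕ)).restrict μ
        = Measure.pi fun i : ({k} : Finset ℕ) => gaussianReal (a i) (Real.toNNReal (lam i)) :=
      hμ {k}
    rw [← h3, ← h1, lintegral_map
      (f := fun y : (({k} : Finset ℕ) : Type) → ℝ =>
        ENNReal.ofReal ((MeasurableEquiv.piUnique fun _ : ({k} : Finset ℕ) => ℝ) y ^ 2))
      (hf.comp (MeasurableEquiv.measurable _)) (Finset.measurable_restrict _)]
    refine lintegral_congr fun x => ?_
    have : (MeasurableEquiv.piUnique (fun _ : ({k} : Finset ℕ) => ℝ)) (({k} : Finset ℕ).restrict x)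
        = x k := by
      simp only [MeasurableEquiv.piUnique, Equiv.piUnique, MeasurableEquiv.coe_mk,
        Equiv.coe_fn_mk, Finset.restrict, hdef]
    rw [this]
  -- summability of the second moments
  have hsum : ∑' k, ∫⁻ x, ENNReal.ofReal (x k ^ 2) ∂μ < ⊤ := by
    have hle : ∑' k, ∫⁻ x, ENNReal.ofReal (x k ^ 2) ∂μ
        ≤ ∑' k, (ENNReal.ofReal (2 * a k ^ 2) + 2 * K * (Real.toNNReal (lam k) : ℝ≥0∞)) := by
      refine ENNReal.tsum_le_tsum fun k => ?_
      rw [hmarg k]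
      calc ∫⁻ y : ℝ, ENNReal.ofReal (y ^ 2) ∂(gaussianReal (a k) (Real.toNNReal (lam k)))
          ≤ ENNReal.ofReal (2 * a k ^ 2) + 2 * (Real.toNNReal (lam k) : ℝ≥0∞) * K :=
            lintegral_sq_gaussianReal_le (a k) (Real.toNNReal (lam k))
        _ = ENNReal.ofReal (2 * a k ^ 2) + 2 * K * (Real.toNNReal (lam k) : ℝ≥0∞) := by
            ring
    refine lt_of_le_of_lt hle ?_
    rw [ENNReal.tsum_add, ENNReal.tsum_mul_left]
    have h1 : ∑' k, ENNReal.ofReal (2 * a k ^ 2) ≠ ⊤ := by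
      rw [← ENNReal.ofReal_tsum_of_nonneg (fun k => by positivity) (ha.mul_left 2)]
      exact ENNReal.ofReal_ne_top
    have h2 : ∑' k, (Real.toNNReal (lam k) : ℝ≥0∞) ≠ ⊤ := by
      have heq : ∀ k, ((Real.toNNReal (lam k) : ℝ≥0∞)) = ENNReal.ofReal (lam k) := fun k => rfl
      simp_rw [heq]
      rw [← ENNReal.ofReal_tsum_of_nonneg hlam_nonneg hlam_summable]
      exact ENNReal.ofReal_ne_top
    exact ENNReal.add_lt_top.2 ⟨h1.lt_top,
      ENNReal.mul_lt_top (ENNReal.mul_lt_top (by norm_num) hK) h2.lt_top⟩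
  -- a.e. finiteness of the sum
  have hlin : ∫⁻ x, ∑' k, ENNReal.ofReal (x k ^ 2) ∂μ < ⊤ := by
    rw [lintegral_tsum fun k => (hmeas k).aemeasurable]
    exact hsum
  have hae : ∀ᵐ x ∂μ, x ∈ {x : ℕ → ℝ | Summable fun k => x k ^ 2} := by
    have h := ae_lt_top (Measurable.ennreal_tsum hmeas) hlin.ne
    refine h.mono fun x hx => ?_
    have hs := ENNReal.summable_toReal hx.ne
    exact hs.congr fun k => ENNReal.toReal_ofReal (sq_nonneg _)
  -- conclude
  have hc : μ {x : ℕ → ℝ | Summable fun k => x k ^ 2}ᶜ = 0 := by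
    rw [Set.compl_setOf]
    exact ae_iff.mp hae
  refine le_antisymm prob_le_one ?_
  calc (1 : ℝ≥0∞) = μ Set.univ := measure_univ.symm
    _ ≤ μ {x : ℕ → ℝ | Summable fun k => x k ^ 2}
        + μ {x : ℕ → ℝ | Summable fun k => x k ^ 2}ᶜ := by
        rw [← Set.union_compl_self {x : ℕ → ℝ | Summable fun k => x k ^ 2}]
        exact measure_union_le _ _
    _ = μ {x : ℕ → ℝ | Summable fun k => x k ^ 2} := by rw [hc, add_zero]
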